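/- Let p ∈ [1,∞) and let κ be the dyadic Cantor measure on ℝ. Then for every integer k ≥ 0, W_p(κ, Δ_{2^k}) ≤ 3^{-k} · W_p(κ, Δ₁); in particular, setting s = log 2 / log 3, W_p(κ, Δ_{2^k}) · (2^k)^{1/s} ≤ W_p(κ, Δ₁) for all k. -/

import Mathlib

open MeasureTheory Metric Filter
open scoped ENNReal

noncomputable section

/-- A transport plan (coupling) between two measures. -/
def IsCoupling {X : Type*} [MeasurableSpace X] (μ ν : Measure X) (π : Measure (X × X)) : Prop :=
  π.map Prod.fst = μ ∧ π.map Prod.snd = ν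

/-- The `L^p` Wasserstein distance between two measures of equal mass. -/
def Wp {X : Type*} [PseudoMetricSpace X] [MeasurableSpace X] (p : ℝ) (μ ν : Measure X) : ℝ≥0∞ :=
  ⨅ (π : Measure (X × X)) (_ : IsCoupling μ ν π),
    (∫⁻ z, edist z.1 z.2 ^ p ∂π) ^ (1 / p)

/-- A measure is supported on at most `N` points. -/
def FinSupported {X : Type*} [MeasurableSpace X] (N : ℕ) (ν : Measure X) : Prop :=
  ∃ S : Finset X, S.card ≤ N ∧ ν ((S : Set X))ᶜ = 0

/-- The `L^p` Wasserstein distance from `μ` to the set `Δ_N` of measures supported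
on at most `N` points and having the same total mass as `μ`. -/
def WpDelta {X : Type*} [PseudoMetricSpace X] [MeasurableSpace X]
    (p : ℝ) (μ : Measure X) (N : ℕ) : ℝ≥0∞ :=
  ⨅ (ν : Measure X) (_ : FinSupported N ν ∧ ν Set.univ = μ Set.univ), Wp p μ ν

/-- The (topological) support of a measure: points all of whose open neighborhoods
have positive measure. -/
def measSupport {X : Type*} [TopologicalSpace X] [MeasurableSpace X] (μ : Measure X) : Set X :=
  {x | ∀ U : Set X, IsOpen U → x ∈ U → 0 < μ U}

/-- The contraction of ratio `1/3` fixing `0`. -/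
def S0 (x : ℝ) : ℝ := x / 3

/-- The contraction of ratio `1/3` fixing `1`. -/
def S1 (x : ℝ) : ℝ := 1 + (x - 1) / 3

/-- `κ` is the dyadic Cantor measure: the unique compactly supported Borel probability
measure on `ℝ` satisfying `κ = ½ S0_# κ + ½ S1_# κ`. -/
def IsDyadicCantorMeasure (κ : Measure ℝ) : Prop :=
  IsProbabilityMeasure κ ∧ (∃ K : Set ℝ, IsCompact K ∧ κ Kᶜ = 0) ∧
    κ = (2⁻¹ : ℝ≥0∞) • κ.map S0 + (2⁻¹ : ℝ≥0∞) • κ.map S1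

lemma S0_meas : Measurable S0 := measurable_id.div_const 3
lemma S1_meas : Measurable S1 :=
  measurable_const.add ((measurable_id.sub_const 1).div_const 3)

lemma edist_S0 (x y : ℝ) : edist (S0 x) (S0 y) = 3⁻¹ * edist x y := by
  simp only [S0, edist_dist, Real.dist_eq, div_sub_div_same, abs_div]
  rw [show |(3:ℝ)| = 3 by norm_num, div_eq_inv_mul,
    ENNReal.ofReal_mul (by norm_num)]
  congr 1
  rw [ENNReal.ofReal_inv_of_pos (by norm_num), ENNReal.ofReal_ofNat]

lemma edist_S1 (x y : ℝ) : edist (S1 x) (S1 y) = 3⁻¹ * edist x y := by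
  have : S1 x - S1 y = (x - y) / 3 := by simp [S1]; ring
  simp only [edist_dist, Real.dist_eq, this, abs_div]
  rw [show |(3:ℝ)| = 3 by norm_num, div_eq_inv_mul,
    ENNReal.ofReal_mul (by norm_num)]
  congr 1
  rw [ENNReal.ofReal_inv_of_pos (by norm_num), ENNReal.ofReal_ofNat]

/-- The cost function is measurable. -/
lemma cost_meas (p : ℝ) : Measurable fun z : ℝ × ℝ => edist z.1 z.2 ^ p :=
  measurable_edist.pow_const p

/-- One contraction step. -/
lemma step (p : ℝ) (hp : 1 ≤ p) (κ : Measure ℝ) (hκ : IsDyadicCantorMeasure κ) (N : ℕ) :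
    WpDelta p κ (2 * N) ≤ (3 : ℝ≥0∞)⁻¹ * WpDelta p κ N := by
  have hp0 : 0 < p := lt_of_lt_of_le one_pos hp
  have h3 : (3 : ℝ≥0∞)⁻¹ ≠ 0 := by simp
  have h3t : (3 : ℝ≥0∞)⁻¹ ≠ ∞ := by simp
  rw [mul_comm (3:ℝ≥0∞)⁻¹ _, ← ENNReal.div_le_iff_le_mul (Or.inl h3) (Or.inl h3t)]
  rw [WpDelta]
  refine le_iInf₂ fun ν hν => ?_
  rw [Wp]
  refine le_iInf₂ fun π hπ => ?_
  rw [ENNReal.div_le_iff_le_mul (Or.inl h3) (Or.inl h3t)]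
  -- construct the new measure and plan
  set C : ℝ≥0∞ := (∫⁻ z, edist z.1 z.2 ^ p ∂π) with hC
  set ν' : Measure ℝ := (2⁻¹ : ℝ≥0∞) • ν.map S0 + (2⁻¹ : ℝ≥0∞) • ν.map S1 with hν'
  set π' : Measure (ℝ × ℝ) :=
    (2⁻¹ : ℝ≥0∞) • π.map (Prod.map S0 S0) + (2⁻¹ : ℝ≥0∞) • π.map (Prod.map S1 S1) with hπ'
  have hP0 : Measurable (Prod.map S0 S0) := S0_meas.prodMap S0_meas
  have hP1 : Measurable (Prod.map S1 S1) := S1_meas.prodMap S1_meas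
  -- coupling
  have hcoup : IsCoupling κ ν' π' := by
    constructor
    · rw [hπ', Measure.map_add _ _ measurable_fst, Measure.map_smul, Measure.map_smul,
        Measure.map_map measurable_fst hP0, Measure.map_map measurable_fst hP1]
      have e0 : Prod.fst ∘ Prod.map S0 S0 = S0 ∘ Prod.fst := rfl
      have e1 : Prod.fst ∘ Prod.map S1 S1 = S1 ∘ Prod.fst := rfl
      rw [e0, e1, ← Measure.map_map S0_meas measurable_fst, ← Measure.map_map S1_meas measurable_fst,
        hπ.1]
      exact hκ.2.2.symm
    · rw [hπ', Measure.map_add _ _ measurable_snd, Measure.map_smul, Measure.map_smul,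
        Measure.map_map measurable_snd hP0, Measure.map_map measurable_snd hP1]
      have e0 : Prod.snd ∘ Prod.map S0 S0 = S0 ∘ Prod.snd := rfl
      have e1 : Prod.snd ∘ Prod.map S1 S1 = S1 ∘ Prod.snd := rfl
      rw [e0, e1, ← Measure.map_map S0_meas measurable_snd, ← Measure.map_map S1_meas measurable_snd,
        hπ.2]
  -- ν' is finitely supported on 2N points with the same mass
  have hν'ok : FinSupported (2 * N) ν' ∧ ν' Set.univ = κ Set.univ := by
    obtain ⟨⟨S, hScard, hS0⟩, hmass⟩ := hν
    constructor
    · refine ⟨S.image S0 ∪ S.image S1, ?_, ?_⟩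
      · calc (S.image S0 ∪ S.image S1).card ≤ (S.image S0).card + (S.image S1).card :=
              Finset.card_union_le _ _
          _ ≤ N + N := add_le_add (le_trans (Finset.card_image_le) hScard)
              (le_trans (Finset.card_image_le) hScard)
          _ = 2 * N := (two_mul N).symm
      · rw [hν']
        simp only [Measure.add_apply, Measure.smul_apply, smul_eq_mul]
        have k0 : (ν.map S0) ((↑(S.image S0 ∪ S.image S1) : Set ℝ))ᶜ = 0 := by
          rw [Measure.map_apply S0_meas (Finset.measurableSet _).compl]
          refine measure_mono_null ?_ hS0
          intro x hx hxS
          exact hx (by simp only [Set.mem_preimage, Finset.coe_union, Set.mem_union]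
                       exact Or.inl (by simpa using Finset.mem_image_of_mem S0 hxS))
        have k1 : (ν.map S1) ((↑(S.image S0 ∪ S.image S1) : Set ℝ))ᶜ = 0 := by
          rw [Measure.map_apply S1_meas (Finset.measurableSet _).compl]
          refine measure_mono_null ?_ hS0
          intro x hx hxS
          exact hx (by simp only [Set.mem_preimage, Finset.coe_union, Set.mem_union]
                       exact Or.inr (by simpa using Finset.mem_image_of_mem S1 hxS))
        rw [k0, k1]; simp
    · rw [hν']
      simp only [Measure.add_apply, Measure.smul_apply, smul_eq_mul]
      rw [Measure.map_apply S0_meas MeasurableSet.univ, Measure.map_apply S1_meas MeasurableSet.univ]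
      simp only [Set.preimage_univ]
      rw [hmass, ← add_mul, ENNReal.inv_two_add_inv_two, one_mul]
  -- cost of π'
  have hcost : (∫⁻ z, edist z.1 z.2 ^ p ∂π') = (3 : ℝ≥0∞)⁻¹ ^ p * C := by
    rw [hπ', lintegral_add_measure, lintegral_smul_measure, lintegral_smul_measure,
      lintegral_map (cost_meas p) hP0, lintegral_map (cost_meas p) hP1]
    have e0 : ∀ z : ℝ × ℝ, edist (Prod.map S0 S0 z).1 (Prod.map S0 S0 z).2 ^ p
        = (3 : ℝ≥0∞)⁻¹ ^ p * (edist z.1 z.2 ^ p) := by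
      intro z
      rw [Prod.map_fst, Prod.map_snd, edist_S0, ENNReal.mul_rpow_of_nonneg _ _ hp0.le]
    have e1 : ∀ z : ℝ × ℝ, edist (Prod.map S1 S1 z).1 (Prod.map S1 S1 z).2 ^ p
        = (3 : ℝ≥0∞)⁻¹ ^ p * (edist z.1 z.2 ^ p) := by
      intro z
      rw [Prod.map_fst, Prod.map_snd, edist_S1, ENNReal.mul_rpow_of_nonneg _ _ hp0.le]
    simp only [e0, e1]
    rw [lintegral_const_mul _ (cost_meas p), ← hC, ← two_mul, smul_eq_mul, ← mul_assoc,
      ENNReal.mul_inv_cancel (by norm_num) (by norm_num), one_mul]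
  -- conclude
  calc WpDelta p κ (2 * N) ≤ Wp p κ ν' := iInf₂_le ν' hν'ok
    _ ≤ (∫⁻ z, edist z.1 z.2 ^ p ∂π') ^ (1 / p) := iInf₂_le π' hcoup
    _ = ((3 : ℝ≥0∞)⁻¹ ^ p * C) ^ (1 / p) := by rw [hcost]
    _ = (3 : ℝ≥0∞)⁻¹ * C ^ (1 / p) := by
        rw [ENNReal.mul_rpow_of_nonneg _ _ (by positivity), ← ENNReal.rpow_mul,
          mul_one_div, div_self hp0.ne', ENNReal.rpow_one]
    _ = C ^ (1 / p) * (3 : ℝ≥0∞)⁻¹ := mul_comm _ _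

theorem cantor_dyadic_upper_bound
    (p : ℝ) (hp : 1 ≤ p) (κ : Measure ℝ) (hκ : IsDyadicCantorMeasure κ)
    (s : ℝ) (hs : s = Real.log 2 / Real.log 3) (k : ℕ) :
    WpDelta p κ (2 ^ k) ≤ ENNReal.ofReal ((3 : ℝ) ^ (-(k : ℝ))) * WpDelta p κ 1 ∧
      WpDelta p κ (2 ^ k) * ENNReal.ofReal (((2 : ℝ) ^ k) ^ (1 / s)) ≤ WpDelta p κ 1 := by
  have main : ∀ n : ℕ, WpDelta p κ (2 ^ n) ≤ ((3 : ℝ≥0∞)⁻¹) ^ n * WpDelta p κ 1 := by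
    intro n
    induction n with
    | zero => simp
    | succ n ih =>
      calc WpDelta p κ (2 ^ (n + 1)) = WpDelta p κ (2 * 2 ^ n) := by rw [pow_succ, mul_comm]
        _ ≤ (3 : ℝ≥0∞)⁻¹ * WpDelta p κ (2 ^ n) := step p hp κ hκ (2 ^ n)
        _ ≤ (3 : ℝ≥0∞)⁻¹ * (((3 : ℝ≥0∞)⁻¹) ^ n * WpDelta p κ 1) := mul_le_mul_right ih _
        _ = ((3 : ℝ≥0∞)⁻¹) ^ (n + 1) * WpDelta p κ 1 := by rw [pow_succ, mul_comm (_ ^ n)]; ring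
  have hcast : ENNReal.ofReal ((3 : ℝ) ^ (-(k : ℝ))) = ((3 : ℝ≥0∞)⁻¹) ^ k := by
    rw [Real.rpow_neg (by norm_num), Real.rpow_natCast, ← inv_pow,
      ENNReal.ofReal_pow (by norm_num), ENNReal.ofReal_inv_of_pos (by norm_num),
      ENNReal.ofReal_ofNat]
  have hcast2 : ENNReal.ofReal (((2 : ℝ) ^ k) ^ (1 / s)) = (3 : ℝ≥0∞) ^ k := by
    have hlog2 : Real.log 2 ≠ 0 := ne_of_gt (Real.log_pos (by norm_num))
    have h2 : (2:ℝ) ^ ((1:ℝ)/s) = 3 := by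
      rw [hs, one_div, inv_div, Real.rpow_def_of_pos (by norm_num),
        mul_div_cancel₀ _ hlog2, Real.exp_log (by norm_num)]
    have h3 : ((2:ℝ) ^ k) ^ ((1:ℝ)/s) = 3 ^ k := by
      rw [← Real.rpow_natCast (2:ℝ) k, ← Real.rpow_mul (by norm_num),
        mul_comm, Real.rpow_mul (by norm_num), h2, Real.rpow_natCast]
    rw [h3, ENNReal.ofReal_pow (by norm_num), ENNReal.ofReal_ofNat]
  refine ⟨hcast ▸ main k, ?_⟩
  rw [hcast2]
  calc WpDelta p κ (2 ^ k) * (3 : ℝ≥0∞) ^ k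
      ≤ (((3 : ℝ≥0∞)⁻¹) ^ k * WpDelta p κ 1) * (3 : ℝ≥0∞) ^ k :=
        mul_le_mul_left (main k) _
    _ = WpDelta p κ 1 * (((3 : ℝ≥0∞)⁻¹) * 3) ^ k := by rw [mul_pow]; ring
    _ = WpDelta p κ 1 := by
        rw [ENNReal.inv_mul_cancel (by norm_num) (by norm_num), one_pow, mul_one]
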